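/- For each fixed x ≥ 0 and λ > 0, the Laguerre transition law W(·|x) defined by W(k|x) = (e^{-x/λ}/(1+λ)) (λ/(1+λ))^k ∑_{j=0}^∞ (x/(λ(1+λ)))^j (k+j)!/((j!)^2 k!) is a probability mass function on ℕ with mean x + λ. -/

import Mathlib

open Real Finset

/-- The Laguerre channel transition pmf `W(k|x)` with noise parameter `lam`. -/
noncomputable def laguerreW (lam x : ℝ) (k : ℕ) : ℝ :=
  Real.exp (-x / lam) / (1 + lam) * (lam / (1 + lam)) ^ k *
    ∑' j : ℕ, (x / (lam * (1 + lam))) ^ j *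
      ((k + j).factorial : ℝ) / ((j.factorial : ℝ) ^ 2 * (k.factorial : ℝ))

/-- Fubini-type helper: swap order of summation for nonneg double series on ℕ × ℕ. -/
lemma fubini_aux {G : ℕ × ℕ → ℝ} {g : ℕ → ℝ} {S : ℝ}
    (hnn : ∀ p, 0 ≤ G p)
    (hrow : ∀ j, HasSum (fun k => G (j, k)) (g j))
    (hcol : HasSum g S) :
    HasSum (fun k => ∑' j, G (j, k)) S := by
  have hcolsum : Summable fun j => ∑' k, G (j, k) := by
    have : (fun j => ∑' k, G (j, k)) = g := funext fun j => (hrow j).tsum_eq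
    rw [this]; exact hcol.summable
  have hG : Summable G :=
    (summable_prod_of_nonneg hnn).2 ⟨fun j => (hrow j).summable, hcolsum⟩
  have hGt : HasSum G S := by
    have h1 : HasSum (fun j => g j) (∑' p, G p) := hG.hasSum.prod_fiberwise hrow
    have := h1.unique hcol
    rw [← this]; exact hG.hasSum
  have hswap : HasSum (fun p : ℕ × ℕ => G p.swap) S :=
    ((Equiv.prodComm ℕ ℕ).hasSum_iff).2 hGt
  exact hswap.prod_fiberwise fun k =>
    (hswap.summable.prod_factor k).hasSum

lemma exp_hasSum (z : ℝ) : HasSum (fun j : ℕ => z ^ j / j.factorial) (Real.exp z) := by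
  rw [Real.exp_eq_exp_ℝ]
  exact NormedSpace.expSeries_div_hasSum_exp z

lemma exp_hasSum' (z : ℝ) :
    HasSum (fun j : ℕ => ((j : ℝ) + 1) * z ^ j / j.factorial) ((z + 1) * Real.exp z) := by
  have e1 := exp_hasSum z
  have e2 : HasSum (fun j : ℕ => (j : ℝ) * z ^ j / j.factorial) (z * Real.exp z) := by
    have h1 : HasSum (fun m : ℕ => ((m + 1 : ℕ) : ℝ) * z ^ (m + 1) / (m + 1).factorial)
        (z * Real.exp z) := by
      have := e1.mul_left z
      convert this using 2 with m
      · rfl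
      rw [Nat.factorial_succ]
      push_cast
      have hm : ((m.factorial : ℝ)) ≠ 0 := Nat.cast_ne_zero.mpr m.factorial_ne_zero
      field_simp
      ring
    have := (hasSum_nat_add_iff (f := fun j : ℕ => (j : ℝ) * z ^ j / j.factorial) 1).1 h1
    simpa using this
  have h3 := e2.add e1
  have heq : (fun j : ℕ => ((j : ℝ) + 1) * z ^ j / j.factorial)
      = fun j : ℕ => (j : ℝ) * z ^ j / j.factorial + z ^ j / j.factorial :=
    funext fun j => by ring
  have h2 : (z + 1) * Real.exp z = z * Real.exp z + Real.exp z := by ring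
  rw [heq, h2]; exact h3
theorem laguerreW_pmf_and_mean (x lam : ℝ) (hx : 0 ≤ x) (hlam : 0 < lam) :
    HasSum (fun k : ℕ => laguerreW lam x k) 1 ∧
    (∑' k : ℕ, (k : ℝ) * laguerreW lam x k) = x + lam := by
  have h1lam : 0 < 1 + lam := by linarith
  set q := lam / (1 + lam) with hqdef
  set y := x / (lam * (1 + lam)) with hydef
  set z := x / lam with hzdef
  have hq0 : 0 ≤ q := div_nonneg hlam.le h1lam.le
  have hq1 : q < 1 := by rw [hqdef, div_lt_one h1lam]; linarith
  have habs : ‖q‖ < 1 := by rw [Real.norm_eq_abs, abs_of_nonneg hq0]; exact hq1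
  have h1mq : 1 - q = 1 / (1 + lam) := by
    rw [hqdef]; field_simp; ring
  have hy0 : 0 ≤ y := div_nonneg hx (by positivity)
  have hyz : y * (1 + lam) = z := by
    rw [hydef, hzdef]; field_simp
  have hbinom : ∀ j : ℕ, HasSum (fun k : ℕ => (((k + j).choose j : ℝ)) * q ^ k)
      (1 / (1 - q) ^ (j + 1)) := fun j =>
    hasSum_choose_mul_geometric_of_norm_lt_one j habs
  set G : ℕ × ℕ → ℝ := fun p =>
    y ^ p.1 / (p.1.factorial : ℝ) * (((p.2 + p.1).choose p.1 : ℝ) * q ^ p.2) with hGdef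
  set H : ℕ × ℕ → ℝ := fun p =>
    y ^ p.1 / (p.1.factorial : ℝ) * ((p.2 : ℝ) * (((p.2 + p.1).choose p.1 : ℝ) * q ^ p.2))
    with hHdef
  have hGnn : ∀ p, 0 ≤ G p := fun p => by
    rw [hGdef]; positivity
  have hHnn : ∀ p, 0 ≤ H p := fun p => by
    rw [hHdef]; positivity
  have hrowG : ∀ j : ℕ, HasSum (fun k => G (j, k))
      (y ^ j / (j.factorial : ℝ) * (1 / (1 - q) ^ (j + 1))) := fun j =>
    (hbinom j).mul_left _
  have hrowH : ∀ j : ℕ, HasSum (fun k => H (j, k))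
      (y ^ j / (j.factorial : ℝ) * (((j : ℝ) + 1) * q * (1 / (1 - q) ^ (j + 2)))) := by
    intro j
    have inner : HasSum (fun k : ℕ => (k : ℝ) * (((k + j).choose j : ℝ) * q ^ k))
        (((j : ℝ) + 1) * q * (1 / (1 - q) ^ (j + 2))) := by
      have base := (hbinom (j + 1)).mul_left (((j : ℝ) + 1) * q)
      have hterm : (fun m : ℕ => ((j : ℝ) + 1) * q * (((m + (j + 1)).choose (j + 1) : ℝ) * q ^ m))
          = fun m : ℕ => ((m + 1 : ℕ) : ℝ) * ((((m + 1) + j).choose j : ℝ) * q ^ (m + 1)) := by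
        funext m
        have hnat : (m + 1 + j).choose (j + 1) * (j + 1) = (m + 1 + j).choose j * (m + 1) := by
          have := Nat.choose_succ_right_eq (m + 1 + j) j
          simpa [Nat.add_sub_cancel] using this
        have hcast : (((m + 1 + j).choose (j + 1) : ℝ)) * ((j : ℝ) + 1)
            = ((m + 1 + j).choose j : ℝ) * ((m : ℝ) + 1) := by
          exact_mod_cast congrArg (fun n : ℕ => (n : ℝ)) hnat
        have harr : m + (j + 1) = m + 1 + j := by omega
        rw [harr]
        push_cast
        push_cast at hcast
        rw [pow_succ]
        linear_combination (q ^ m * q) * hcast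
      rw [hterm] at base
      have h0 : (fun k : ℕ => (k : ℝ) * (((k + j).choose j : ℝ) * q ^ k)) 0 = 0 := by simp
      have := (hasSum_nat_add_iff
        (f := fun k : ℕ => (k : ℝ) * (((k + j).choose j : ℝ) * q ^ k)) 1).1 base
      simpa using this
    exact inner.mul_left _
  have hpow : ∀ j : ℕ, (1 : ℝ) / (1 - q) ^ (j + 1) = (1 + lam) ^ (j + 1) := by
    intro j
    rw [h1mq]
    field_simp
    rw [← mul_pow, one_div_mul_cancel h1lam.ne', one_pow]
  have hcolG : HasSum (fun j : ℕ => y ^ j / (j.factorial : ℝ) * (1 / (1 - q) ^ (j + 1)))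
      ((1 + lam) * Real.exp z) := by
    have base := (exp_hasSum z).mul_left (1 + lam)
    have hterm : (fun j : ℕ => y ^ j / (j.factorial : ℝ) * (1 / (1 - q) ^ (j + 1)))
        = fun j : ℕ => (1 + lam) * (z ^ j / (j.factorial : ℝ)) := by
      funext j
      rw [hpow j, ← hyz, mul_pow, pow_succ]
      have : ((j.factorial : ℝ)) ≠ 0 := Nat.cast_ne_zero.mpr j.factorial_ne_zero
      field_simp
    rw [hterm]; exact base
  have hcolH : HasSum (fun j : ℕ =>
      y ^ j / (j.factorial : ℝ) * (((j : ℝ) + 1) * q * (1 / (1 - q) ^ (j + 2))))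
      (q * (1 + lam) ^ 2 * ((z + 1) * Real.exp z)) := by
    have base := (exp_hasSum' z).mul_left (q * (1 + lam) ^ 2)
    have hterm : (fun j : ℕ =>
        y ^ j / (j.factorial : ℝ) * (((j : ℝ) + 1) * q * (1 / (1 - q) ^ (j + 2))))
        = fun j : ℕ => q * (1 + lam) ^ 2 * (((j : ℝ) + 1) * z ^ j / (j.factorial : ℝ)) := by
      funext j
      have hp2 : (1 : ℝ) / (1 - q) ^ (j + 2) = (1 + lam) ^ (j + 2) := by
        rw [h1mq]
        field_simp
        rw [← mul_pow, one_div_mul_cancel h1lam.ne', one_pow]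
      rw [hp2, ← hyz, mul_pow]
      have : ((j.factorial : ℝ)) ≠ 0 := Nat.cast_ne_zero.mpr j.factorial_ne_zero
      field_simp
      ring
    rw [hterm]; exact base
  have hW := fubini_aux hGnn hrowG hcolG
  have hM := fubini_aux hHnn hrowH hcolH
  -- relate the inner tsums to laguerreW
  have hfac : ∀ k j : ℕ, ((k + j).factorial : ℝ)
      = ((k + j).choose j : ℝ) * (j.factorial : ℝ) * (k.factorial : ℝ) := by
    intro k j
    have := Nat.choose_mul_factorial_mul_factorial (Nat.le_add_left j k)
    rw [Nat.add_sub_cancel] at this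
    exact_mod_cast this.symm
  have hT : ∀ k : ℕ, q ^ k * (∑' j : ℕ, y ^ j * (((k + j).factorial : ℝ))
      / ((j.factorial : ℝ) ^ 2 * (k.factorial : ℝ))) = ∑' j : ℕ, G (j, k) := by
    intro k
    rw [← tsum_mul_left]
    congr 1
    funext j
    rw [hGdef]
    simp only
    rw [hfac k j]
    have hj : ((j.factorial : ℝ)) ≠ 0 := Nat.cast_ne_zero.mpr j.factorial_ne_zero
    have hk : ((k.factorial : ℝ)) ≠ 0 := Nat.cast_ne_zero.mpr k.factorial_ne_zero
    rw [Nat.add_comm k j]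
    field_simp
  have hWfun : (fun k : ℕ => laguerreW lam x k)
      = fun k : ℕ => Real.exp (-x / lam) / (1 + lam) * ∑' j : ℕ, G (j, k) := by
    funext k
    rw [laguerreW, ← hqdef, ← hydef, mul_assoc, hT k]
  have hexp : Real.exp (-x / lam) * Real.exp z = 1 := by
    rw [← Real.exp_add, hzdef]
    have : -x / lam + x / lam = 0 := by ring
    rw [this, Real.exp_zero]
  constructor
  · rw [hWfun]
    have := hW.mul_left (Real.exp (-x / lam) / (1 + lam))
    have hval : Real.exp (-x / lam) / (1 + lam) * ((1 + lam) * Real.exp z) = 1 := by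
      field_simp
      rw [← neg_div]; exact hexp
    rwa [hval] at this
  · have hMfun : (fun k : ℕ => (k : ℝ) * laguerreW lam x k)
        = fun k : ℕ => Real.exp (-x / lam) / (1 + lam) * ∑' j : ℕ, H (j, k) := by
      funext k
      rw [laguerreW, ← hqdef, ← hydef]
      have hTk : (k : ℝ) * (q ^ k * (∑' j : ℕ, y ^ j * (((k + j).factorial : ℝ))
          / ((j.factorial : ℝ) ^ 2 * (k.factorial : ℝ)))) = ∑' j : ℕ, H (j, k) := by
        rw [hT k, ← tsum_mul_left]
        congr 1
        funext j
        rw [hGdef, hHdef]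
        simp only
        ring
      rw [← hTk]
      ring
    have hsum : HasSum (fun k : ℕ => (k : ℝ) * laguerreW lam x k) (x + lam) := by
      rw [hMfun]
      have := hM.mul_left (Real.exp (-x / lam) / (1 + lam))
      have hval : Real.exp (-x / lam) / (1 + lam) * (q * (1 + lam) ^ 2 * ((z + 1) * Real.exp z))
          = x + lam := by
        have hq : q * (1 + lam) = lam := by
          rw [hqdef]; field_simp
        have hz1 : lam * (z + 1) = x + lam := by
          rw [hzdef]; field_simp
        calc Real.exp (-x / lam) / (1 + lam) * (q * (1 + lam) ^ 2 * ((z + 1) * Real.exp z))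
            = (Real.exp (-x / lam) * Real.exp z) * (q * (1 + lam)) * (z + 1)
              * ((1 + lam) / (1 + lam)) := by ring
          _ = x + lam := by
              rw [hexp, hq, div_self (ne_of_gt h1lam)]
              rw [mul_one, one_mul, hz1]
      rwa [hval] at this
    exact hsum.tsum_eq
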